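/- arXiv:1212.0589 — 3 statements merged into one kernel-verified Lean document; each statement's English description precedes it below -/
import Mathlib

section
/- The real line ℝ does not satisfy the selection principle S₁(Ω,𝒪): there is a sequence ⟨𝒰ₙ⟩ (n ≥ 1) of ω-covers of ℝ such that for every choice of Uₙ ∈ 𝒰ₙ, the family {Uₙ : n ≥ 1} fails to cover ℝ. -/
open Set

/-- An ω-cover: an open cover not containing the whole space such that every
finite subset lies in a single member. -/
def IsOmegaCover {X : Type*} [TopologicalSpace X] (𝒰 : Set (Set X)) : Prop :=
  (∀ u ∈ 𝒰, IsOpen u) ∧ (univ : Set X) ∉ 𝒰 ∧ ⋃₀ 𝒰 = univ ∧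
    ∀ F : Set X, F.Finite → ∃ u ∈ 𝒰, F ⊆ u

theorem stmt4 :
    ∃ 𝒰 : ℕ → Set (Set ℝ), (∀ n, IsOmegaCover (𝒰 n)) ∧
      ∀ f : ℕ → Set ℝ, (∀ n, f n ∈ 𝒰 n) → (⋃ n, f n) ≠ univ := by
  refine ⟨fun n => {u | IsOpen u ∧ MeasureTheory.volume u < (1/2 : ENNReal)^n}, fun n => ?_, ?_⟩
  · refine ⟨fun u hu => hu.1, ?_, ?_, ?_⟩
    · rintro ⟨-, hv⟩
      rw [Real.volume_univ] at hv
      exact (lt_irrefl _ (hv.trans_le le_top))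
    · apply eq_univ_of_forall
      intro x
      have h0 : (0:ENNReal) < (1/2)^n := ENNReal.pow_pos (by norm_num) n
      obtain ⟨U, hsub, hUo, hUv⟩ :=
        Set.exists_isOpen_lt_of_lt ({x} : Set ℝ) _ (by
          rw [Real.volume_singleton]; exact h0)
      exact ⟨U, ⟨hUo, hUv⟩, hsub (mem_singleton x)⟩
    · intro F hF
      have h0 : (0:ENNReal) < (1/2)^n := ENNReal.pow_pos (by norm_num) n
      obtain ⟨U, hsub, hUo, hUv⟩ :=
        Set.exists_isOpen_lt_of_lt F _ (by
          rw [hF.measure_zero MeasureTheory.volume]; exact h0)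
      exact ⟨U, ⟨hUo, hUv⟩, hsub⟩
  · intro f hf h
    have hle : MeasureTheory.volume (⋃ n, f n) ≤ ∑' n, ((1/2 : ENNReal))^n :=
      le_trans (MeasureTheory.measure_iUnion_le f)
        (ENNReal.tsum_le_tsum fun n => (hf n).2.le)
    have hlt : MeasureTheory.volume (⋃ n, f n) < ⊤ := by
      refine hle.trans_lt ?_
      simp [ENNReal.tsum_geometric]
    rw [h, Real.volume_univ] at hlt
    exact (lt_irrefl _ hlt)
end

section
/- The real line ℝ does not satisfy S_fin(Ω,𝒦): there is a sequence ⟨𝒰ₙ⟩ of ω-covers of ℝ such that for every choice of finite subfamilies 𝒱ₙ ⊆ 𝒰ₙ, the union ⋃ₙ 𝒱ₙ is not a k-cover of ℝ. -/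
open Set

/-- A k-cover: an open cover not containing the whole space such that every
compact subset lies in a single member. -/
def IsKCover {X : Type*} [TopologicalSpace X] (𝒰 : Set (Set X)) : Prop :=
  (∀ u ∈ 𝒰, IsOpen u) ∧ (univ : Set X) ∉ 𝒰 ∧ ⋃₀ 𝒰 = univ ∧
    ∀ K : Set X, IsCompact K → ∃ u ∈ 𝒰, K ⊆ u

theorem stmt5 :
    ∃ 𝒰 : ℕ → Set (Set ℝ), (∀ n, IsOmegaCover (𝒰 n)) ∧
      ∀ 𝒱 : ℕ → Set (Set ℝ), (∀ n, 𝒱 n ⊆ 𝒰 n ∧ (𝒱 n).Finite) →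
        ¬ IsKCover (⋃ n, 𝒱 n) := by
  refine ⟨fun _ => {u | IsOpen u ∧ MeasureTheory.volume u < 1}, ?_, ?_⟩
  · intro n
    refine ⟨fun u hu => hu.1, ?_, ?_, ?_⟩
    · intro h
      have := h.2
      rw [Real.volume_univ] at this
      exact absurd this (by simp)
    · ext x
      simp only [mem_sUnion, mem_univ, iff_true]
      refine ⟨Metric.ball x (1/4), ⟨Metric.isOpen_ball, ?_⟩, Metric.mem_ball_self (by norm_num)⟩
      rw [Real.volume_ball]
      rw [show (1 : ENNReal) = ENNReal.ofReal 1 by simp]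
      exact ENNReal.ofReal_lt_ofReal_iff_of_nonneg (by norm_num) |>.mpr (by norm_num)
    · intro F hF
      classical
      set s := hF.toFinset with hs
      set ε : ℝ := 1 / (4 * (s.card + 1)) with hε
      have hεpos : 0 < ε := by positivity
      refine ⟨⋃ x ∈ s, Metric.ball x ε, ⟨?_, ?_⟩, ?_⟩
      · exact isOpen_biUnion fun x _ => Metric.isOpen_ball
      · calc MeasureTheory.volume (⋃ x ∈ s, Metric.ball x ε)
            ≤ ∑ x ∈ s, MeasureTheory.volume (Metric.ball x ε) :=
              MeasureTheory.measure_biUnion_finset_le s _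
          _ = s.card * ENNReal.ofReal (2 * ε) := by
              simp [Real.volume_ball, Finset.sum_const, nsmul_eq_mul]
          _ < 1 := by
              rw [show ((s.card : ENNReal)) = ENNReal.ofReal (s.card : ℝ) by simp,
                ← ENNReal.ofReal_mul (by positivity),
                show (1 : ENNReal) = ENNReal.ofReal 1 by simp]
              refine (ENNReal.ofReal_lt_ofReal_iff_of_nonneg (by positivity)).mpr ?_
              have hc : (0:ℝ) ≤ s.card := Nat.cast_nonneg _
              have h4 : (0:ℝ) < 4 * ((s.card:ℝ) + 1) := by positivity
              have heq : (s.card:ℝ) * (2 * (1 / (4 * ((s.card:ℝ) + 1)))) =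
                  (s.card:ℝ) * 2 / (4 * ((s.card:ℝ) + 1)) := by ring
              rw [hε, heq, div_lt_one h4]
              linarith
      · intro x hx
        exact mem_biUnion (hF.mem_toFinset.mpr hx) (Metric.mem_ball_self hεpos)
  · intro 𝒱 h𝒱 hk
    obtain ⟨_, _, _, h⟩ := hk
    obtain ⟨u, hu, hsub⟩ := h (Icc 0 1) isCompact_Icc
    obtain ⟨n, hn⟩ := mem_iUnion.mp hu
    have hmem := (h𝒱 n).1 hn
    have h1 : (1 : ENNReal) ≤ MeasureTheory.volume u := by
      calc (1 : ENNReal) = MeasureTheory.volume (Icc (0:ℝ) 1) := by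
            rw [Real.volume_Icc]; norm_num
        _ ≤ MeasureTheory.volume u := MeasureTheory.measure_mono hsub
    exact absurd hmem.2 (not_lt.mpr h1)
end

section
/- For every m ≥ 1, the euclidean space ℝ^m satisfies S_fin(Ω,Ω): for every sequence ⟨𝒰ₙ⟩ (n ≥ 1) of ω-covers of ℝ^m there exist finite subfamilies 𝒱ₙ ⊆ 𝒰ₙ such that ⋃ₙ 𝒱ₙ is an ω-cover of ℝ^m. -/
open Set

lemma omega_key {X : Type*} [TopologicalSpace X] {𝒰 : Set (Set X)} (h : IsOmegaCover 𝒰)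
    {K : Set X} (hK : IsCompact K) (n : ℕ) :
    ∃ V ⊆ 𝒰, V.Finite ∧ ∀ f : Fin n → X, (∀ i, f i ∈ K) → ∃ u ∈ V, ∀ i, f i ∈ u := by
  have hKn : IsCompact (Set.pi univ (fun _ : Fin n => K)) := isCompact_univ_pi (fun _ => hK)
  have cover : (Set.pi univ fun _ : Fin n => K) ⊆
      ⋃ u ∈ 𝒰, Set.pi univ (fun _ : Fin n => u) := by
    intro f _
    obtain ⟨u, hu, hsub⟩ := h.2.2.2 (Set.range f) (Set.finite_range f)
    exact mem_iUnion₂.2 ⟨u, hu, fun i _ => hsub ⟨i, rfl⟩⟩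
  obtain ⟨V, hV𝒰, hVfin, hVcov⟩ := hKn.elim_finite_subcover_image
    (fun u hu => isOpen_set_pi finite_univ (fun _ _ => h.1 u hu)) cover
  refine ⟨V, hV𝒰, hVfin, fun f hf => ?_⟩
  obtain ⟨u, hu, hfu⟩ := mem_iUnion₂.1 (hVcov (fun i _ => hf i))
  exact ⟨u, hu, fun i => hfu i (mem_univ i)⟩

theorem stmt8 (m : ℕ) (hm : 1 ≤ m)
    (𝒰 : ℕ → Set (Set (Fin m → ℝ))) (h : ∀ n, IsOmegaCover (𝒰 n)) :
    ∃ 𝒱 : ℕ → Set (Set (Fin m → ℝ)), (∀ n, 𝒱 n ⊆ 𝒰 n ∧ (𝒱 n).Finite) ∧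
      IsOmegaCover (⋃ n, 𝒱 n) := by
  classical
  set X := Fin m → ℝ
  set K : ℕ → Set X := fun n => Set.pi univ (fun _ : Fin m => Icc (-(n : ℝ)) n) with hKdef
  have hKcpt : ∀ n, IsCompact (K n) := fun n => isCompact_univ_pi (fun _ => isCompact_Icc)
  choose V hV𝒰 hVfin hVcov using fun n => omega_key (h n) (hKcpt n) n
  refine ⟨V, fun n => ⟨hV𝒰 n, hVfin n⟩, ?_⟩
  have hfinprop : ∀ F : Set X, F.Finite → ∃ u ∈ ⋃ n, V n, F ⊆ u := by
    intro F hF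
    rcases F.eq_empty_or_nonempty with rfl | ⟨x₀, hx₀⟩
    · have h0 : ∀ i : Fin 1, (0 : X) ∈ K 1 := by
        intro _
        intro j _
        rw [show (0 : X) j = (0 : ℝ) from rfl]; constructor <;> norm_num
      obtain ⟨u, hu, _⟩ := hVcov 1 (fun _ => (0 : X)) h0
      exact ⟨u, mem_iUnion.2 ⟨1, hu⟩, empty_subset u⟩
    · haveI := hF.fintype
      set k := Fintype.card F with hk
      set e := Fintype.equivFin F with he
      set C := hF.toFinset.sup (fun x => ⌈‖x‖⌉₊) with hC
      set n := max C k with hn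
      have hFK : F ⊆ K n := by
        intro x hx j _
        have h1 : ‖x j‖ ≤ ‖x‖ := norm_le_pi_norm x j
        have h2 : ‖x‖ ≤ (C : ℝ) := by
          have : ⌈‖x‖⌉₊ ≤ C := Finset.le_sup (f := fun x : X => ⌈‖x‖⌉₊) (hF.mem_toFinset.2 hx)
          calc ‖x‖ ≤ (⌈‖x‖⌉₊ : ℝ) := Nat.le_ceil _
            _ ≤ (C : ℝ) := by exact_mod_cast this
        have h3 : (C : ℝ) ≤ (n : ℝ) := by exact_mod_cast le_max_left C k
        have h4 : ‖x j‖ ≤ (n : ℝ) := h1.trans (h2.trans h3)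
        rw [Real.norm_eq_abs, abs_le] at h4
        exact ⟨h4.1, h4.2⟩
      have hkn : k ≤ n := le_max_right C k
      set f : Fin n → X := fun i =>
        if hi : (i : ℕ) < k then (e.symm ⟨i, hi⟩ : X) else x₀ with hf
      have hrange : ∀ i, f i ∈ F := by
        intro i
        by_cases hi : (i : ℕ) < k
        · simp only [hf, dif_pos hi]; exact (e.symm ⟨i, hi⟩).2
        · simp only [hf, dif_neg hi]; exact hx₀
      obtain ⟨u, hu, hfu⟩ := hVcov n f (fun i => hFK (hrange i))
      refine ⟨u, mem_iUnion.2 ⟨n, hu⟩, ?_⟩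
      intro x hx
      have hlt : ((e ⟨x, hx⟩ : Fin k) : ℕ) < n := lt_of_lt_of_le (e ⟨x, hx⟩).2 hkn
      have : f ⟨(e ⟨x, hx⟩ : Fin k), hlt⟩ = x := by
        simp only [hf, dif_pos (e ⟨x, hx⟩).2]
        have : (⟨((e ⟨x, hx⟩ : Fin k) : ℕ), (e ⟨x, hx⟩).2⟩ : Fin k) = e ⟨x, hx⟩ := by
          apply Fin.ext; rfl
        split_ifs with hc
        · simp [Fin.eta]
        · exact absurd (e ⟨x, hx⟩).2 hc
      rw [← this]
      exact hfu _
  refine ⟨?_, ?_, ?_, hfinprop⟩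
  · rintro u hu
    obtain ⟨n, hn⟩ := mem_iUnion.1 hu
    exact (h n).1 u (hV𝒰 n hn)
  · intro hu
    obtain ⟨n, hn⟩ := mem_iUnion.1 hu
    exact (h n).2.1 (hV𝒰 n hn)
  · apply eq_univ_of_forall
    intro x
    obtain ⟨u, hu, hxu⟩ := hfinprop {x} (finite_singleton x)
    exact ⟨u, hu, hxu rfl⟩
end
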